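/- Let X and Y be finite sets and W : X → DCCone(Y) a game-theoretic channel, and let W(X) := ⋃_{x∈X} W(x). Then the capacity of the game-theoretic channel satisfies C(W) ≤ I(W(X)). -/

import Mathlib

open scoped BigOperators

noncomputable section

/-- The prefix `y^{i-1} = (y_0, …, y_{i-1})` of `y : Fin n → Y`, i.e. the first `i` entries. -/
def prefixOf {Y : Type*} {n : ℕ} (y : Fin n → Y) (i : Fin n) : Fin i.1 → Y :=
  fun j => y ⟨j.1, j.2.trans i.2⟩

/-- `A ⊆ ℝ^Y` is a pricing downward closed (DC) cone. -/
def IsDCCone {Y : Type*} (A : Set (Y → ℝ)) : Prop :=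
  (∀ a ∈ A, ∀ γ : ℝ, 0 ≤ γ → γ • a ∈ A) ∧
  (∀ a ∈ A, ∀ b : Y → ℝ, (∀ y, 0 ≤ b y) → a - b ∈ A)

/-- The channel coding game `(W, n, L, ε)` is a guaranteed win. -/
def GuaranteedWin {X Y : Type*} (W : X → Set (Y → ℝ)) (n L : ℕ) (ε : ℝ) : Prop :=
  ∃ (x : Fin L → Fin n → X)
    (w : (i : Fin n) → Fin L → (Fin i.1 → Y) → (Y → ℝ))
    (dec : (Fin n → Y) → Fin L),
    (∀ (i : Fin n) (m : Fin L) (ypre : Fin i.1 → Y), w i m ypre ∈ W (x m i)) ∧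
    (∀ (m : Fin L) (y : Fin n → Y),
      (∑ i, w i m (prefixOf y i) (y i)) - (if dec y = m then 0 else 1) ≥ -ε)

/-- Game-theoretic capacity: the sup of nonnegative rates `R` such that for all `n₀` and
`0 < ε < 1` there is `n ≥ n₀` making the game `(W, n, ⌊2^{nR}⌋, ε)` a guaranteed win.
By the `sSup ∅ = ⊥` convention, the capacity is `-∞` if no such rate exists. -/
def capacity {X Y : Type*} (W : X → Set (Y → ℝ)) : EReal :=
  sSup {c : EReal | ∃ R : ℝ, 0 ≤ R ∧ c = (R : EReal) ∧
    ∀ n₀ : ℕ, 0 < n₀ → ∀ ε : ℝ, 0 < ε → ε < 1 →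
      ∃ n, n₀ ≤ n ∧ GuaranteedWin W n ⌊(2 : ℝ) ^ ((n : ℝ) * R)⌋₊ ε}

/-- Probability mass functions on a finite set `Y`. -/
def probSimplex (Y : Type*) [Fintype Y] : Set (Y → ℝ) :=
  {p | (∀ y, 0 ≤ p y) ∧ ∑ y, p y = 1}

/-- KL divergence in bits, valued in the extended reals. -/
def KLdiv {Y : Type*} [Fintype Y] (p q : Y → ℝ) : EReal :=
  if ∀ y, q y = 0 → p y = 0 then
    (((∑ y, if p y = 0 then 0 else p y * Real.logb 2 (p y / q y)) : ℝ) : EReal)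
  else ⊤

/-- Information capacity `I(A)` of a pricing DC cone `A`.  The conventions
`I(∅) = -∞` and `I(ℝ^Y) = +∞` follow from `⨆ (empty) = ⊥` and `⨅ (empty) = ⊤`. -/
def infoCap {Y : Type*} [Fintype Y] (A : Set (Y → ℝ)) : EReal :=
  ⨅ q ∈ probSimplex Y, ⨆ a ∈ A,
    ⨅ p ∈ {p ∈ probSimplex Y | ∑ y, p y * a y ≤ 0}, KLdiv p q

namespace GTaux

variable {Y : Type*} [Fintype Y]

omit [Fintype Y] in
lemma prefixOf_snoc_castSucc {n : ℕ} (z : Fin n → Y) (v : Y) (i : Fin n) :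
    prefixOf (Fin.snoc z v) i.castSucc = prefixOf z i := by
  funext j
  show (Fin.snoc z v : Fin (n+1) → Y) ⟨j.1, _⟩ = z ⟨j.1, _⟩
  have h : j.1 < n := j.2.trans i.2
  have : (⟨j.1, _⟩ : Fin (n+1)) = Fin.castSucc ⟨j.1, h⟩ := rfl
  rw [this, Fin.snoc_castSucc]

omit [Fintype Y] in
lemma prefixOf_snoc_last {n : ℕ} (z : Fin n → Y) (v : Y) :
    prefixOf (Fin.snoc z v) (Fin.last n) = z := by
  funext j
  show (Fin.snoc z v : Fin (n+1) → Y) ⟨j.1, _⟩ = z j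
  have : (⟨j.1, _⟩ : Fin (n+1)) = Fin.castSucc j := rfl
  rw [this, Fin.snoc_castSucc]

def snocEquiv (Y : Type*) (n : ℕ) : ((Fin n → Y) × Y) ≃ (Fin (n+1) → Y) where
  toFun p := Fin.snoc p.1 p.2
  invFun y := (Fin.init y, y (Fin.last n))
  left_inv p := by simp [Fin.init_snoc, Fin.snoc_last]
  right_inv y := by simp [Fin.snoc_init_self]

def seqMeas {n : ℕ} (K : (i : Fin n) → (Fin i.1 → Y) → Y → ℝ) (y : Fin n → Y) : ℝ :=
  ∏ i, K i (prefixOf y i) (y i)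

omit [Fintype Y] in
lemma seqMeas_nonneg {n : ℕ} {K : (i : Fin n) → (Fin i.1 → Y) → Y → ℝ}
    (hK : ∀ i z v, 0 ≤ K i z v) (y : Fin n → Y) : 0 ≤ seqMeas K y :=
  Finset.prod_nonneg fun i _ => hK i _ _

omit [Fintype Y] in
lemma seqMeas_snoc {n : ℕ} (K : (i : Fin (n+1)) → (Fin i.1 → Y) → Y → ℝ)
    (z : Fin n → Y) (v : Y) :
    seqMeas K (Fin.snoc z v) =
      seqMeas (fun i : Fin n => K i.castSucc) z * K (Fin.last n) z v := by
  unfold seqMeas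
  rw [Fin.prod_univ_castSucc]
  congr 1
  · exact Finset.prod_congr rfl fun i _ => by
      rw [prefixOf_snoc_castSucc, Fin.snoc_castSucc]
  · rw [prefixOf_snoc_last, Fin.snoc_last]

lemma sum_seqMeas {n : ℕ} (K : (i : Fin n) → (Fin i.1 → Y) → Y → ℝ)
    (hK1 : ∀ i z, ∑ v, K i z v = 1) :
    ∑ y : Fin n → Y, seqMeas K y = 1 := by
  induction n with
  | zero => simp [seqMeas]
  | succ n ih =>
    rw [← Equiv.sum_comp (snocEquiv Y n), Fintype.sum_prod_type]
    simp only [snocEquiv, Equiv.coe_fn_mk, seqMeas_snoc]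
    calc ∑ z : Fin n → Y, ∑ v, seqMeas (fun i : Fin n => K i.castSucc) z * K (Fin.last n) z v
        = ∑ z : Fin n → Y, seqMeas (fun i : Fin n => K i.castSucc) z := by
          refine Finset.sum_congr rfl fun z _ => ?_
          rw [← Finset.mul_sum, hK1, mul_one]
      _ = 1 := ih _ (fun i z => hK1 i.castSucc z)

lemma seq_exp_le {n : ℕ} (K F : (i : Fin n) → (Fin i.1 → Y) → Y → ℝ) (c : ℝ)
    (hK0 : ∀ i z v, 0 ≤ K i z v) (hK1 : ∀ i z, ∑ v, K i z v = 1)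
    (hF : ∀ i z, ∑ v, K i z v * F i z v ≤ c) :
    ∑ y : Fin n → Y, seqMeas K y * (∑ i, F i (prefixOf y i) (y i)) ≤ n * c := by
  induction n with
  | zero => simp
  | succ n ih =>
    set g : (Fin (n+1) → Y) → ℝ := fun y => seqMeas K y * (∑ i, F i (prefixOf y i) (y i)) with hg
    show (∑ y : Fin (n+1) → Y, g y) ≤ _
    rw [← Equiv.sum_comp (snocEquiv Y n) g, Fintype.sum_prod_type]
    simp only [snocEquiv, Equiv.coe_fn_mk]
    have key : ∀ (z : Fin n → Y) (v : Y),
        g (Fin.snoc z v)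
        = seqMeas (fun i : Fin n => K i.castSucc) z * K (Fin.last n) z v *
          ((∑ i : Fin n, F i.castSucc (prefixOf z i) (z i)) + F (Fin.last n) z v) := by
      intro z v
      simp only [hg]
      rw [seqMeas_snoc, Fin.sum_univ_castSucc]
      congr 2
      · exact Finset.sum_congr rfl fun i _ => by
          rw [prefixOf_snoc_castSucc, Fin.snoc_castSucc]
      · rw [prefixOf_snoc_last, Fin.snoc_last]
    simp only [key]
    set μ := seqMeas (fun i : Fin n => K i.castSucc) with hμ
    have hμ0 : ∀ z, 0 ≤ μ z := seqMeas_nonneg (fun i z v => hK0 i.castSucc z v)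
    have hμ1 : ∑ z : Fin n → Y, μ z = 1 := sum_seqMeas _ (fun i z => hK1 i.castSucc z)
    have step : ∀ z : Fin n → Y,
        ∑ v, μ z * K (Fin.last n) z v * ((∑ i : Fin n, F i.castSucc (prefixOf z i) (z i)) + F (Fin.last n) z v)
        ≤ μ z * (∑ i : Fin n, F i.castSucc (prefixOf z i) (z i)) + μ z * c := by
      intro z
      have heq : ∑ v, μ z * K (Fin.last n) z v * ((∑ i : Fin n, F i.castSucc (prefixOf z i) (z i)) + F (Fin.last n) z v)
          = μ z * (∑ i : Fin n, F i.castSucc (prefixOf z i) (z i)) * (∑ v, K (Fin.last n) z v)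
            + μ z * (∑ v, K (Fin.last n) z v * F (Fin.last n) z v) := by
        calc ∑ v, μ z * K (Fin.last n) z v * ((∑ i : Fin n, F i.castSucc (prefixOf z i) (z i)) + F (Fin.last n) z v)
            = ∑ v, (μ z * (∑ i : Fin n, F i.castSucc (prefixOf z i) (z i)) * K (Fin.last n) z v
                + μ z * (K (Fin.last n) z v * F (Fin.last n) z v)) :=
              Finset.sum_congr rfl fun v _ => by ring
          _ = _ := by
              rw [Finset.sum_add_distrib, ← Finset.mul_sum, ← Finset.mul_sum]
      rw [heq, hK1 (Fin.last n) z, mul_one]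
      gcongr
      · exact hμ0 z
      · exact hF (Fin.last n) z
    calc ∑ z : Fin n → Y, ∑ v, μ z * K (Fin.last n) z v *
          ((∑ i : Fin n, F i.castSucc (prefixOf z i) (z i)) + F (Fin.last n) z v)
        ≤ ∑ z : Fin n → Y, (μ z * (∑ i : Fin n, F i.castSucc (prefixOf z i) (z i)) + μ z * c) :=
          Finset.sum_le_sum fun z _ => step z
      _ = (∑ z : Fin n → Y, μ z * (∑ i : Fin n, F i.castSucc (prefixOf z i) (z i)))
            + (∑ z : Fin n → Y, μ z) * c := by rw [Finset.sum_add_distrib, Finset.sum_mul]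
      _ ≤ n * c + 1 * c := by
          gcongr ?_ + ?_
          · exact ih _ _ (fun i z v => hK0 i.castSucc z v) (fun i z => hK1 i.castSucc z)
              (fun i z => hF i.castSucc z)
          · rw [hμ1]
      _ = (n+1 : ℕ) * c := by push_cast; ring

lemma kl_term_ge {a b : ℝ} (t : ℝ) (ha : 0 ≤ a) (hb : 0 ≤ b) (hab : b = 0 → a = 0) :
    a * t + (a - b * (2:ℝ)^t) / Real.log 2 ≤ (if a = 0 then 0 else a * Real.logb 2 (a/b)) := by
  have hlog2 : (0:ℝ) < Real.log 2 := Real.log_pos one_lt_two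
  have h2t : (0:ℝ) < (2:ℝ)^t := Real.rpow_pos_of_pos two_pos t
  rcases eq_or_lt_of_le ha with h0 | hpos
  · rw [if_pos h0.symm, ← h0]
    have hnum : (0:ℝ) - b * (2:ℝ)^t ≤ 0 := by nlinarith
    have hd : ((0:ℝ) - b * (2:ℝ)^t) / Real.log 2 ≤ 0 := div_nonpos_of_nonpos_of_nonneg hnum hlog2.le
    linarith
  · have hbpos : 0 < b := by
      rcases eq_or_lt_of_le hb with h | h
      · exact absurd (hab h.symm) (ne_of_gt hpos)
      · exact h
    rw [if_neg (ne_of_gt hpos)]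
    set s := a / (b * (2:ℝ)^t) with hs
    have hspos : 0 < s := by positivity
    have hlogs : 1 - (b*(2:ℝ)^t)/a ≤ Real.log s := by
      have h1 := Real.log_le_sub_one_of_pos (inv_pos.mpr hspos)
      rw [Real.log_inv] at h1
      have h2 : s⁻¹ = (b*(2:ℝ)^t)/a := by
        rw [hs]; field_simp
      rw [h2] at h1; linarith
    have hab2 : a/b = s * (2:ℝ)^t := by
      rw [hs]; field_simp
    have hlogab : Real.logb 2 (a/b) = t + Real.log s / Real.log 2 := by
      rw [hab2, Real.logb, Real.log_mul (ne_of_gt hspos) (ne_of_gt h2t),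
        Real.log_rpow two_pos]
      field_simp; ring
    rw [hlogab]
    have key : a - b*(2:ℝ)^t ≤ a * Real.log s := by
      have h3 := mul_le_mul_of_nonneg_left hlogs hpos.le
      have heq : a * (1 - (b*(2:ℝ)^t)/a) = a - b*(2:ℝ)^t := by field_simp
      linarith
    calc a * t + (a - b*(2:ℝ)^t)/Real.log 2
        ≤ a * t + (a * Real.log s)/Real.log 2 := by gcongr
      _ = a * (t + Real.log s / Real.log 2) := by ring

lemma sum_klterm_ge {α : Type*} [Fintype α] (μ Q : α → ℝ) (T : Finset α) (t : ℝ)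
    (hμ : ∀ y, 0 ≤ μ y) (hQ : ∀ y, 0 ≤ Q y) (habs : ∀ y, Q y = 0 → μ y = 0) :
    (∑ y ∈ T, μ y) * t + ((∑ y ∈ T, μ y) - (∑ y ∈ T, Q y) * (2:ℝ)^t) / Real.log 2
      ≤ ∑ y ∈ T, (if μ y = 0 then 0 else μ y * Real.logb 2 (μ y / Q y)) := by
  have h1 : ∀ y ∈ T, μ y * t + (μ y - Q y * (2:ℝ)^t) / Real.log 2
      ≤ (if μ y = 0 then 0 else μ y * Real.logb 2 (μ y / Q y)) :=
    fun y _ => kl_term_ge t (hμ y) (hQ y) (habs y)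
  calc (∑ y ∈ T, μ y) * t + ((∑ y ∈ T, μ y) - (∑ y ∈ T, Q y) * (2:ℝ)^t) / Real.log 2
      = ∑ y ∈ T, (μ y * t + (μ y - Q y * (2:ℝ)^t) / Real.log 2) := by
        rw [Finset.sum_add_distrib, ← Finset.sum_mul, ← Finset.sum_div,
          Finset.sum_sub_distrib, ← Finset.sum_mul]
      _ ≤ _ := Finset.sum_le_sum h1

end GTaux

set_option maxHeartbeats 2000000

/-- The capacity of a game-theoretic channel is at most the information capacity of the
range cone `W(X) = ⋃_x W(x)`. -/
theorem capacity_le_infoCap {X Y : Type*} [Fintype X] [Fintype Y]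
    (W : X → Set (Y → ℝ)) (hW : ∀ x, IsDCCone (W x)) :
    capacity W ≤ infoCap (⋃ x, W x) := by
  classical
  open GTaux in
  refine sSup_le ?_
  rintro c ⟨R, hR0, rfl, hprop⟩
  unfold infoCap
  refine le_iInf₂ fun q hq => ?_
  set A := ⋃ x, W x with hA
  set g : (Y → ℝ) → EReal :=
    fun a => ⨅ p ∈ {p ∈ probSimplex Y | ∑ y, p y * a y ≤ 0}, KLdiv p q with hg
  show (R : EReal) ≤ ⨆ a ∈ A, g a
  set Cq := ⨆ a ∈ A, g a with hCqdef
  by_contra hlt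
  push_neg at hlt
  -- hlt : Cq < (R:EReal)
  -- Step 1: A is nonempty, hence 0 ∈ A
  have hA0 : (0 : Y → ℝ) ∈ A := by
    obtain ⟨n1, hn1, x1, w1, dec1, hw1, -⟩ := hprop 1 one_pos (1/2) (by norm_num) (by norm_num)
    have hL1 : 1 ≤ ⌊(2:ℝ) ^ ((n1 : ℝ) * R)⌋₊ := by
      refine Nat.le_floor ?_
      have h0 : ((2:ℝ)) ^ (0:ℝ) ≤ (2:ℝ) ^ ((n1:ℝ) * R) :=
        Real.rpow_le_rpow_of_exponent_le one_le_two (by positivity)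
      rw [Real.rpow_zero] at h0
      exact_mod_cast h0
    have ha0 : w1 ⟨0, hn1⟩ ⟨0, hL1⟩ (fun j => j.elim0) ∈ A :=
      Set.mem_iUnion.2 ⟨_, hw1 _ _ _⟩
    obtain ⟨x0, hx0⟩ := Set.mem_iUnion.1 ha0
    have h00 := (hW x0).1 _ hx0 0 le_rfl
    rw [zero_smul] at h00
    exact Set.mem_iUnion.2 ⟨x0, h00⟩
  -- Step 2: Gibbs inequality and 0 ≤ Cq
  have hlog2 : (0:ℝ) < Real.log 2 := Real.log_pos one_lt_two
  have hKL0 : ∀ p ∈ probSimplex Y, (0:EReal) ≤ KLdiv p q := by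
    intro p hp
    unfold KLdiv
    split_ifs with h
    · refine EReal.coe_nonneg.2 ?_
      have hge := GTaux.sum_klterm_ge p q Finset.univ 0 hp.1 hq.1 h
      rw [hp.2, hq.2, Real.rpow_zero] at hge
      simpa using le_trans (by norm_num) hge
    · exact le_top
  have hCq0 : (0:EReal) ≤ Cq := by
    have h1 : (0:EReal) ≤ g 0 := by
      rw [hg]
      exact le_iInf₂ fun p hp => hKL0 p hp.1
    exact h1.trans (le_biSup g hA0)
  -- Step 3: Cq is a real number C with 0 ≤ C < R
  have hCtop : Cq ≠ ⊤ := (hlt.trans (EReal.coe_lt_top R)).ne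
  have hCbot : Cq ≠ ⊥ := fun h => by rw [h] at hCq0; exact (EReal.bot_lt_zero).not_ge hCq0
  set C := Cq.toReal with hCdef
  have hCq_eq : Cq = (C : EReal) := (EReal.coe_toReal hCtop hCbot).symm
  have hC0 : 0 ≤ C := by
    rw [hCq_eq] at hCq0; exact_mod_cast hCq0
  have hCR : C < R := by
    rw [hCq_eq] at hlt; exact_mod_cast hlt
  have hRpos : 0 < R := lt_of_le_of_lt hC0 hCR
  set δ := (R - C)/4 with hδdef
  have hδpos : 0 < δ := by rw [hδdef]; linarith
  set C' := C + δ with hC'def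
  set ε := min (1/2 : ℝ) ((R - C)/(4*R)) with hεdef
  have hε0 : 0 < ε := lt_min (by norm_num) (div_pos (by linarith) (by linarith))
  have hε12 : ε ≤ 1/2 := min_le_left _ _
  have hε1 : ε < 1 := lt_of_le_of_lt hε12 (by norm_num)
  have hεR : ε * R ≤ (R - C)/4 := by
    have h1 : ε ≤ (R - C)/(4*R) := min_le_right _ _
    have := mul_le_mul_of_nonneg_right h1 hRpos.le
    calc ε * R ≤ (R - C)/(4*R) * R := this
      _ = (R - C)/4 := by field_simp
  -- Step 4: choice of response distributions
  have hchoice : ∀ a : Y → ℝ, ∃ p : Y → ℝ, a ∈ A →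
      ((∀ y, 0 ≤ p y) ∧ (∑ y, p y = 1) ∧ (∑ y, p y * a y ≤ 0) ∧ (∀ v, q v = 0 → p v = 0) ∧
        ((∑ v, if p v = 0 then 0 else p v * Real.logb 2 (p v / q v)) ≤ C')) := by
    intro a
    by_cases ha : a ∈ A
    · have h2 : g a ≤ Cq := le_biSup g ha
      have h3 : Cq < (C' : EReal) := by
        rw [hCq_eq]
        exact_mod_cast (show C < C' by rw [hC'def]; linarith)
      have h1 : (⨅ p ∈ {p ∈ probSimplex Y | ∑ y, p y * a y ≤ 0}, KLdiv p q) < (C' : EReal) := by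
        have := h2.trans_lt h3
        rw [hg] at this
        exact this
      obtain ⟨p, hp1⟩ := iInf_lt_iff.1 h1
      obtain ⟨hpS, h4⟩ := iInf_lt_iff.1 hp1
      refine ⟨p, fun _ => ?_⟩
      obtain ⟨⟨hp0, hps⟩, hpa⟩ := hpS
      unfold KLdiv at h4
      split_ifs at h4 with hcond
      · exact ⟨hp0, hps, hpa, hcond, by exact_mod_cast h4.le⟩
      · exact absurd h4 not_top_lt
    · exact ⟨q, fun h => absurd h ha⟩
  choose P hP using hchoice
  -- Step 5: choose a large n with a guaranteed win
  set n₀ : ℕ := max (⌈(8:ℝ)/(R-C)⌉₊ + 1) (⌈(2:ℝ)/R⌉₊ + 1) with hn₀def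
  have hn₀pos : 0 < n₀ := lt_of_lt_of_le (Nat.succ_pos _) (le_max_left _ _)
  obtain ⟨n, hn, hwin⟩ := hprop n₀ hn₀pos ε hε0 hε1
  set L := ⌊(2:ℝ) ^ ((n:ℝ) * R)⌋₊ with hLdef
  obtain ⟨x, w, dec, hw, hscore⟩ := hwin
  have hn8 : 8/(R-C) < (n:ℝ) := by
    have h1 : (⌈(8:ℝ)/(R-C)⌉₊ + 1 : ℕ) ≤ n := le_trans (le_max_left _ _) hn
    have h2 : (8:ℝ)/(R-C) ≤ (⌈(8:ℝ)/(R-C)⌉₊ : ℝ) := Nat.le_ceil _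
    have h3 : ((⌈(8:ℝ)/(R-C)⌉₊ + 1 : ℕ) : ℝ) ≤ (n:ℝ) := by exact_mod_cast h1
    push_cast at h3; linarith
  have hnR2 : 2 ≤ (n:ℝ) * R := by
    have h1 : (⌈(2:ℝ)/R⌉₊ + 1 : ℕ) ≤ n := le_trans (le_max_right _ _) hn
    have h2 : (2:ℝ)/R ≤ (⌈(2:ℝ)/R⌉₊ : ℝ) := Nat.le_ceil _
    have h3 : ((⌈(2:ℝ)/R⌉₊ + 1 : ℕ) : ℝ) ≤ (n:ℝ) := by exact_mod_cast h1
    push_cast at h3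
    have h4 : (2:ℝ)/R * R ≤ ((n:ℝ) - 1) * R :=
      mul_le_mul_of_nonneg_right (by linarith) hRpos.le
    rw [div_mul_cancel₀ _ (ne_of_gt hRpos)] at h4
    nlinarith [hRpos.le]
  have h2nR4 : (4:ℝ) ≤ (2:ℝ) ^ ((n:ℝ) * R) := by
    have h5 := Real.rpow_le_rpow_of_exponent_le one_le_two hnR2
    rw [show ((2:ℝ) ^ (2:ℝ)) = 4 by
      rw [show ((2:ℝ)^(2:ℝ)) = (2:ℝ)^((2:ℕ):ℝ) from by norm_num, Real.rpow_natCast]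
      norm_num] at h5
    exact h5
  have hL4 : (4:ℝ) ≤ (L:ℝ) := by
    have h6 : (4:ℕ) ≤ L := Nat.le_floor (by exact_mod_cast h2nR4)
    exact_mod_cast h6
  have hLpos : 0 < L := by
    have : (0:ℝ) < (L:ℝ) := by linarith
    exact_mod_cast this
  have hLRpos : (0:ℝ) < (L:ℝ) := by linarith
  have hlogL : (n:ℝ)*R - 1 ≤ Real.logb 2 (L:ℝ) := by
    have hfl : (2:ℝ)^((n:ℝ)*R) - 1 < (L:ℝ) := Nat.sub_one_lt_floor _
    have hhalf : (2:ℝ)^((n:ℝ)*R - 1) ≤ (L:ℝ) := by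
      rw [Real.rpow_sub two_pos, Real.rpow_one]
      linarith
    calc (n:ℝ)*R - 1 = Real.logb 2 ((2:ℝ)^((n:ℝ)*R - 1)) :=
          (Real.logb_rpow two_pos (by norm_num)).symm
      _ ≤ Real.logb 2 (L:ℝ) :=
          Real.logb_le_logb_of_le one_lt_two (Real.rpow_pos_of_pos two_pos _) hhalf
  -- Step 6: the reference product measure and a rarely-decoded message
  set Qn := GTaux.seqMeas (n := n) (Y := Y) (fun _ _ => q) with hQndef
  have hQn1 : ∑ y : Fin n → Y, Qn y = 1 := GTaux.sum_seqMeas _ (fun _ _ => hq.2)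
  have hQn0 : ∀ y, 0 ≤ Qn y := GTaux.seqMeas_nonneg (fun _ _ v => hq.1 v)
  obtain ⟨mstar, hmstar⟩ : ∃ m : Fin L,
      ∑ y ∈ Finset.univ.filter (fun y => dec y = m), Qn y ≤ 1/(L:ℝ) := by
    have hsum : ∑ m : Fin L, ∑ y ∈ Finset.univ.filter (fun y => dec y = m), Qn y = 1 := by
      rw [Finset.sum_fiberwise]; exact hQn1
    by_contra hcon
    push_neg at hcon
    have h5 : ∑ _m : Fin L, (1/(L:ℝ))
        < ∑ m : Fin L, ∑ y ∈ Finset.univ.filter (fun y => dec y = m), Qn y :=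
      Finset.sum_lt_sum_of_nonempty ⟨⟨0, hLpos⟩, Finset.mem_univ _⟩ (fun m _ => hcon m)
    rw [hsum, Finset.sum_const, Finset.card_univ, Fintype.card_fin, nsmul_eq_mul,
      mul_one_div, div_self (ne_of_gt hLRpos)] at h5
    exact lt_irrefl _ h5
  set E := Finset.univ.filter (fun y : Fin n → Y => dec y = mstar) with hEdef
  set Ec := Finset.univ.filter (fun y : Fin n → Y => ¬ dec y = mstar) with hEcdef
  -- Step 7: the message-mstar strategy measure
  set K : (i : Fin n) → (Fin i.1 → Y) → Y → ℝ := fun i z => P (w i mstar z) with hKdef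
  have hPK : ∀ (i : Fin n) (z : Fin i.1 → Y),
      (∀ v, 0 ≤ K i z v) ∧ (∑ v, K i z v = 1) ∧ (∑ v, K i z v * w i mstar z v ≤ 0) ∧
      (∀ v, q v = 0 → K i z v = 0) ∧
      ((∑ v, if K i z v = 0 then 0 else K i z v * Real.logb 2 (K i z v / q v)) ≤ C') :=
    fun i z => hP (w i mstar z) (Set.mem_iUnion.2 ⟨x mstar i, hw i mstar z⟩)
  have hK0 : ∀ i z v, 0 ≤ K i z v := fun i z v => (hPK i z).1 v
  have hK1 : ∀ i z, ∑ v, K i z v = 1 := fun i z => (hPK i z).2.1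
  set μ := GTaux.seqMeas K with hμdef
  have hμ0 : ∀ y, 0 ≤ μ y := GTaux.seqMeas_nonneg hK0
  have hμ1 : ∑ y : Fin n → Y, μ y = 1 := GTaux.sum_seqMeas K hK1
  -- Step 8: decoding succeeds with μ-probability ≥ 1 - ε
  have hexp0 : ∑ y : Fin n → Y, μ y * (∑ i, w i mstar (prefixOf y i) (y i)) ≤ 0 := by
    have h7 := GTaux.seq_exp_le K (fun i z v => w i mstar z v) 0 hK0 hK1
      (fun i z => (hPK i z).2.2.1)
    simpa using h7
  have hPE : 1 - ε ≤ ∑ y ∈ E, μ y := by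
    have hind : ∑ y : Fin n → Y, μ y * (if dec y = mstar then 0 else 1) ≤ ε := by
      have hpt : ∀ y : Fin n → Y, μ y * (if dec y = mstar then 0 else 1)
          ≤ μ y * (ε + ∑ i, w i mstar (prefixOf y i) (y i)) := by
        intro y
        refine mul_le_mul_of_nonneg_left ?_ (hμ0 y)
        have h8 := hscore mstar y
        linarith [h8]
      calc ∑ y : Fin n → Y, μ y * (if dec y = mstar then 0 else 1)
          ≤ ∑ y : Fin n → Y, μ y * (ε + ∑ i, w i mstar (prefixOf y i) (y i)) :=
            Finset.sum_le_sum (fun y _ => hpt y)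
        _ = ∑ y : Fin n → Y, (ε * μ y + μ y * (∑ i, w i mstar (prefixOf y i) (y i))) :=
            Finset.sum_congr rfl fun y _ => by ring
        _ = ε * (∑ y : Fin n → Y, μ y)
              + ∑ y : Fin n → Y, μ y * (∑ i, w i mstar (prefixOf y i) (y i)) := by
            rw [Finset.sum_add_distrib, ← Finset.mul_sum]
        _ ≤ ε * 1 + 0 := by rw [hμ1]; linarith [hexp0]
        _ = ε := by ring
    have hsplit : ∑ y : Fin n → Y, μ y * (if dec y = mstar then 0 else 1)
        = 1 - ∑ y ∈ E, μ y := by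
      have h6 : ∑ y ∈ E, μ y = ∑ y : Fin n → Y, (if dec y = mstar then μ y else 0) := by
        rw [hEdef, Finset.sum_filter]
      have h7 : ∀ y : Fin n → Y, μ y * (if dec y = mstar then 0 else 1)
          = μ y - (if dec y = mstar then μ y else 0) := by
        intro y; by_cases h : dec y = mstar <;> simp [h]
      calc ∑ y : Fin n → Y, μ y * (if dec y = mstar then 0 else 1)
          = ∑ y : Fin n → Y, (μ y - (if dec y = mstar then μ y else 0)) :=
            Finset.sum_congr rfl fun y _ => h7 y
        _ = (∑ y : Fin n → Y, μ y) - ∑ y : Fin n → Y, (if dec y = mstar then μ y else 0) :=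
            Finset.sum_sub_distrib _ _
        _ = 1 - ∑ y ∈ E, μ y := by rw [hμ1, ← h6]
    rw [hsplit] at hind
    linarith
  -- Step 9: per-step information bound
  set F2 : (i : Fin n) → (Fin i.1 → Y) → Y → ℝ :=
    fun i z v => if K i z v = 0 then 0 else Real.logb 2 (K i z v / q v) with hF2def
  have hstep2 : ∀ i z, ∑ v, K i z v * F2 i z v ≤ C' := by
    intro i z
    have h7 := (hPK i z).2.2.2.2
    calc ∑ v, K i z v * F2 i z v
        = ∑ v, (if K i z v = 0 then 0 else K i z v * Real.logb 2 (K i z v / q v)) := by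
          refine Finset.sum_congr rfl fun v _ => ?_
          by_cases h : K i z v = 0 <;> simp [hF2def, h]
      _ ≤ C' := h7
  have hexp2 : ∑ y : Fin n → Y, μ y * (∑ i, F2 i (prefixOf y i) (y i)) ≤ (n:ℝ) * C' :=
    GTaux.seq_exp_le K F2 C' hK0 hK1 hstep2
  -- Step 10: pointwise identity for the log-likelihood ratio
  set d : (Fin n → Y) → ℝ :=
    fun y => if μ y = 0 then 0 else μ y * Real.logb 2 (μ y / Qn y) with hddef
  have habs : ∀ y, Qn y = 0 → μ y = 0 := by
    intro y hQ0
    by_contra hμne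
    have hμy : μ y = ∏ i, K i (prefixOf y i) (y i) := rfl
    have hKne : ∀ i : Fin n, K i (prefixOf y i) (y i) ≠ 0 := fun i =>
      Finset.prod_ne_zero_iff.1 (hμy ▸ hμne) i (Finset.mem_univ i)
    have hqne : ∀ i : Fin n, q (y i) ≠ 0 :=
      fun i h0 => hKne i ((hPK i (prefixOf y i)).2.2.2.1 (y i) h0)
    have hQy : Qn y = ∏ i, q (y i) := rfl
    exact (Finset.prod_ne_zero_iff.2 (fun i _ => hqne i)) (hQy ▸ hQ0)
  have hdid : ∀ y, d y = μ y * (∑ i, F2 i (prefixOf y i) (y i)) := by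
    intro y
    by_cases h : μ y = 0
    · simp [hddef, h]
    · have hμy : μ y = ∏ i, K i (prefixOf y i) (y i) := rfl
      have hKne : ∀ i : Fin n, K i (prefixOf y i) (y i) ≠ 0 := fun i =>
        Finset.prod_ne_zero_iff.1 (hμy ▸ h) i (Finset.mem_univ i)
      have hqne : ∀ i : Fin n, q (y i) ≠ 0 :=
        fun i h0 => hKne i ((hPK i (prefixOf y i)).2.2.2.1 (y i) h0)
      have hQy : Qn y = ∏ i, q (y i) := rfl
      show (if μ y = 0 then 0 else μ y * Real.logb 2 (μ y / Qn y)) = _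
      rw [if_neg h]
      congr 1
      rw [hμy, hQy, ← Finset.prod_div_distrib,
        Real.logb_prod _ _ (fun i _ => div_ne_zero (hKne i) (hqne i))]
      exact Finset.sum_congr rfl fun i _ => by
        simp only [hF2def, if_neg (hKne i)]
  have hdsum_le : ∑ y : Fin n → Y, d y ≤ (n:ℝ) * C' := by
    calc ∑ y : Fin n → Y, d y = ∑ y : Fin n → Y, μ y * (∑ i, F2 i (prefixOf y i) (y i)) :=
        Finset.sum_congr rfl (fun y _ => hdid y)
      _ ≤ (n:ℝ) * C' := hexp2
  -- Step 11: lower bound for the divergence sum on E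
  set t := Real.logb 2 ((1-ε) * L) with htdef
  have h1e : (1:ℝ)/2 ≤ 1 - ε := by linarith
  have harg : (2:ℝ) ≤ (1-ε) * L := by nlinarith
  have hargpos : (0:ℝ) < (1-ε)*L := by linarith
  have ht0 : 0 ≤ t := Real.logb_nonneg one_lt_two (by linarith)
  have h2t : (2:ℝ)^t = (1-ε)*L := Real.rpow_logb two_pos (by norm_num) hargpos
  have hElow : (1-ε) * t ≤ ∑ y ∈ E, d y := by
    have hge := GTaux.sum_klterm_ge μ Qn E t hμ0 hQn0 habs
    have h8 : (1-ε) * t ≤ (∑ y ∈ E, μ y) * t := mul_le_mul_of_nonneg_right hPE ht0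
    have hQE0 : 0 ≤ ∑ y ∈ E, Qn y := Finset.sum_nonneg fun y _ => hQn0 y
    have h9 : 0 ≤ ((∑ y ∈ E, μ y) - (∑ y ∈ E, Qn y) * (2:ℝ)^t) / Real.log 2 := by
      apply div_nonneg _ hlog2.le
      have h10 : (∑ y ∈ E, Qn y) * (2:ℝ)^t ≤ (1/(L:ℝ)) * ((1-ε)*L) := by
        rw [h2t]
        exact mul_le_mul_of_nonneg_right hmstar (by linarith)
      have h11 : (1/(L:ℝ)) * ((1-ε)*(L:ℝ)) = 1-ε := by
        field_simp
      linarith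
    linarith [hge]
  -- Step 12: lower bound for the divergence sum on the complement
  have hlog2half : (1/2:ℝ) < Real.log 2 := by
    have := Real.log_two_gt_d9; linarith
  have hEclow : -(2:ℝ) ≤ ∑ y ∈ Ec, d y := by
    have hge := GTaux.sum_klterm_ge μ Qn Ec 0 hμ0 hQn0 habs
    rw [Real.rpow_zero, mul_zero, zero_add, mul_one] at hge
    have hQEc : ∑ y ∈ Ec, Qn y ≤ 1 := by
      rw [← hQn1]
      exact Finset.sum_le_sum_of_subset_of_nonneg (Finset.subset_univ _) (fun y _ _ => hQn0 y)
    have hPEc : 0 ≤ ∑ y ∈ Ec, μ y := Finset.sum_nonneg fun y _ => hμ0 y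
    have h12 : -(1:ℝ) ≤ (∑ y ∈ Ec, μ y) - ∑ y ∈ Ec, Qn y := by linarith
    have h13 : (-(1:ℝ))/Real.log 2 ≤ ((∑ y ∈ Ec, μ y) - ∑ y ∈ Ec, Qn y)/Real.log 2 :=
      (div_le_div_iff_of_pos_right hlog2).2 h12
    have h14 : -(2:ℝ) ≤ (-(1:ℝ))/Real.log 2 := by
      rw [le_div_iff₀ hlog2]
      linarith [hlog2half]
    linarith [hge, h13, h14]
  -- Step 13: putting everything together
  have hsplitEU : ∑ y ∈ E, d y + ∑ y ∈ Ec, d y = ∑ y : Fin n → Y, d y := by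
    rw [hEdef, hEcdef]
    exact Finset.sum_filter_add_sum_filter_not _ _ _
  have htexp : t = Real.logb 2 (1-ε) + Real.logb 2 (L:ℝ) := by
    rw [htdef, Real.logb_mul (by linarith : (1:ℝ)-ε ≠ 0) (ne_of_gt hLRpos)]
  have hlogb1e : -(1:ℝ) ≤ Real.logb 2 (1-ε) := by
    have h11 : Real.logb 2 ((1:ℝ)/2) ≤ Real.logb 2 (1-ε) :=
      Real.logb_le_logb_of_le one_lt_two (by norm_num) h1e
    have h12 : Real.logb 2 ((1:ℝ)/2) = -1 := by
      rw [show ((1:ℝ)/2) = (2:ℝ)⁻¹ by norm_num, Real.logb_inv,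
        Real.logb_self_eq_one one_lt_two]
    linarith
  have hlogb1e0 : Real.logb 2 (1-ε) ≤ 0 :=
    Real.logb_nonpos one_lt_two (by linarith) (by linarith)
  have hfinal1 : -1 + (1-ε)*((n:ℝ)*R - 1) ≤ (1-ε)*t := by
    rw [htexp, mul_add]
    have hA1 : -(1:ℝ) ≤ (1-ε) * Real.logb 2 (1-ε) := by nlinarith
    have hA2 : (1-ε) * ((n:ℝ)*R - 1) ≤ (1-ε) * Real.logb 2 (L:ℝ) :=
      mul_le_mul_of_nonneg_left hlogL (by linarith)
    linarith
  have hfinal2 : (1-ε)*t - 2 ≤ (n:ℝ) * C' := by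
    linarith [hdsum_le, hElow, hEclow, hsplitEU]
  have hexpand : (1-ε)*((n:ℝ)*R - 1) = (n:ℝ)*R - 1 - ε*((n:ℝ)*R) + ε := by ring
  have hεnR : ε * ((n:ℝ)*R) ≤ (n:ℝ) * ((R - C)/4) := by
    calc ε * ((n:ℝ)*R) = (n:ℝ) * (ε * R) := by ring
      _ ≤ (n:ℝ) * ((R-C)/4) := mul_le_mul_of_nonneg_left hεR (Nat.cast_nonneg n)
  have hC'eq : C' = C + (R-C)/4 := by rw [hC'def, hδdef]
  clear_value t ε C' δ C
  have hfinal3 : (n:ℝ)*R - (n:ℝ)*((R-C)/4) - 4 ≤ (n:ℝ) * C' := by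
    linarith [hfinal1, hfinal2, hexpand, hεnR, hε0.le]
  rw [hC'eq] at hfinal3
  have h8nc : (8:ℝ) < (n:ℝ) * (R - C) := by
    have := (div_lt_iff₀ (by linarith : (0:ℝ) < R - C)).1 hn8
    linarith
  nlinarith [hfinal3, h8nc]


end
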